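/- arXiv:2307.05705 — 2 statements merged into one kernel-verified Lean document; each statement's English description precedes it below -/
import Mathlib

section
/- For probability measures σ, μ on ℝ (with σ absolutely continuous), the map T = F_μ^{-1} ∘ F_σ, where F_σ is the CDF of σ and F_μ^{-1} its generalized inverse, pushes σ forward to μ, i.e., T_♯σ = μ. -/
open MeasureTheory
open scoped ENNReal RealInnerProductSpace

noncomputable section

abbrev Eu (n : ℕ) := EuclideanSpace ℝ (Fin n)

def W2sq {X : Type*} [MeasurableSpace X] [NormedAddCommGroup X] (σ μ : Measure X) : ℝ≥0∞ :=
  ⨅ (π : Measure (X × X)) (_ : π.map Prod.fst = σ ∧ π.map Prod.snd = μ),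
    ∫⁻ p, (‖p.1 - p.2‖₊ : ℝ≥0∞) ^ 2 ∂π

def W2 {X : Type*} [MeasurableSpace X] [NormedAddCommGroup X] (σ μ : Measure X) : ℝ≥0∞ :=
  W2sq σ μ ^ (1/2 : ℝ)

def cdf' (μ : Measure ℝ) (x : ℝ) : ℝ := (μ (Set.Iic x)).toReal

def qf (μ : Measure ℝ) (y : ℝ) : ℝ := sInf {z : ℝ | y ≤ cdf' μ z}

def otMap1d (σ μ : Measure ℝ) (x : ℝ) : ℝ := qf μ (cdf' σ x)

def proj {n : ℕ} (θ : Eu n) (x : Eu n) : ℝ := (inner ℝ x θ : ℝ)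

def sliceOf {n : ℕ} (σ : Measure (Eu n)) (θ : Eu n) : Measure ℝ := σ.map (proj θ)

def sliceMap {n : ℕ} (σ μ : Measure (Eu n)) (θ : Fin n → Eu n) (j : ℕ) (x : Eu n) : Eu n :=
  ∑ i : Fin n,
    (if (i : ℕ) < j then otMap1d (sliceOf σ (θ i)) (sliceOf μ (θ i)) (proj (θ i) x)
     else proj (θ i) x) • θ i

def singleSlice {n : ℕ} (σ μ : Measure (Eu n)) (θ : Eu n) (x : Eu n) : Eu n :=
  x + (otMap1d (sliceOf σ θ) (sliceOf μ θ) (proj θ x) - proj θ x) • θ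

def FiniteSecondMoment {X : Type*} [MeasurableSpace X] [NormedAddCommGroup X]
    (μ : Measure X) : Prop :=
  ∫⁻ x, (‖x‖₊ : ℝ≥0∞) ^ 2 ∂μ < ⊤


open ProbabilityTheory Set Filter Topology Function

lemma cdf'_eq (μ : Measure ℝ) [IsProbabilityMeasure μ] : cdf' μ = ⇑(cdf μ) := by
  ext x; rw [cdf', cdf_eq_real, measureReal_def]

section

variable (μ : Measure ℝ) [IsProbabilityMeasure μ]

omit [IsProbabilityMeasure μ] in
lemma qf_set_nonempty {y : ℝ} (h1 : y < 1) : {z : ℝ | y ≤ cdf μ z}.Nonempty := by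
  have : ∀ᶠ z in atTop, y < cdf μ z :=
    (tendsto_cdf_atTop μ).eventually (eventually_gt_nhds h1)
  obtain ⟨z, hz⟩ := this.exists
  exact ⟨z, hz.le⟩

omit [IsProbabilityMeasure μ] in
lemma qf_set_bddBelow {y : ℝ} (h0 : 0 < y) : BddBelow {z : ℝ | y ≤ cdf μ z} := by
  have : ∀ᶠ z in atBot, cdf μ z < y :=
    (tendsto_cdf_atBot μ).eventually (eventually_lt_nhds h0)
  obtain ⟨z0, hz0⟩ := this.exists
  refine ⟨z0, fun z hz => ?_⟩
  by_contra h
  exact absurd (hz.trans ((monotone_cdf μ) (le_of_not_ge h))) (not_le.2 hz0)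

omit [IsProbabilityMeasure μ] in
lemma qf_mem {y : ℝ} (h0 : 0 < y) (h1 : y < 1) :
    y ≤ cdf μ (sInf {z : ℝ | y ≤ cdf μ z}) := by
  set S := {z : ℝ | y ≤ cdf μ z} with hSdef
  set a := sInf S with ha
  by_contra h
  push_neg at h
  have hrc : ContinuousWithinAt (cdf μ) (Ici a) a := (cdf μ).right_continuous a
  have hev : ∀ᶠ z in 𝓝[≥] a, cdf μ z < y := hrc.eventually (eventually_lt_nhds h)
  obtain ⟨u, hu, hIco⟩ := mem_nhdsGE_iff_exists_Ico_subset.1 hev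
  have hlb : u ≤ a := by
    apply le_csInf (qf_set_nonempty μ h1)
    intro z hz
    by_contra hzc
    push_neg at hzc
    have hza : a ≤ z := csInf_le (qf_set_bddBelow μ h0) hz
    have : cdf μ z < y := hIco ⟨hza, hzc⟩
    exact absurd hz (not_le.2 this)
  exact absurd hu (not_lt.2 hlb)

lemma qf_le_iff {y x : ℝ} (h0 : 0 < y) (h1 : y < 1) :
    qf μ y ≤ x ↔ y ≤ cdf μ x := by
  rw [qf, cdf'_eq μ]
  constructor
  · intro h
    exact (qf_mem μ h0 h1).trans ((monotone_cdf μ) h)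
  · intro h
    exact csInf_le (qf_set_bddBelow μ h0) h

lemma qf_monoOn : MonotoneOn (qf μ) (Ioo (0:ℝ) 1) := by
  intro y1 hy1 y2 hy2 h
  rw [qf, qf, cdf'_eq μ]
  exact csInf_le_csInf (qf_set_bddBelow μ hy1.1) (qf_set_nonempty μ hy2.2)
    (fun z hz => le_trans h hz)

end

section

variable (σ : Measure ℝ) [IsProbabilityMeasure σ]

lemma cdf_leftLim (hac : σ ≪ volume) (a : ℝ) : leftLim (⇑(cdf σ)) a = cdf σ a := by
  have h1 : σ {a} = 0 := hac Real.volume_singleton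
  have h2 : (cdf σ).measure {a} = ENNReal.ofReal (cdf σ a - leftLim (⇑(cdf σ)) a) :=
    (cdf σ).measure_singleton a
  rw [measure_cdf, h1] at h2
  have h3 : cdf σ a - leftLim (⇑(cdf σ)) a ≤ 0 := ENNReal.ofReal_eq_zero.1 h2.symm
  exact le_antisymm ((monotone_cdf σ).leftLim_le le_rfl) (by linarith)

lemma cdf_level_set (hac : σ ≪ volume) {c : ℝ} (h0 : 0 ≤ c) (h1 : c ≤ 1) :
    σ {t | cdf σ t ≤ c} = ENNReal.ofReal c := by
  set S := {t | cdf σ t ≤ c} with hSdef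
  have hdc : ∀ {s t : ℝ}, s ∈ S → t ≤ s → t ∈ S :=
    fun hs hts => le_trans ((monotone_cdf σ) hts) hs
  rcases S.eq_empty_or_nonempty with hS | hS
  · have hc : c ≤ 0 := by
      have hall : ∀ z, c < cdf σ z := by
        intro z
        by_contra hz
        rw [eq_empty_iff_forall_notMem] at hS
        exact hS z (le_of_not_gt hz)
      exact ge_of_tendsto (tendsto_cdf_atBot σ) (Eventually.of_forall fun z => (hall z).le)
    have : c = 0 := le_antisymm hc h0
    simp [hS, this]
  by_cases hbdd : BddAbove S
  · set a := sSup S with ha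
    have hIio : Iio a ⊆ S := by
      intro t ht
      obtain ⟨s, hs, hts⟩ := (lt_csSup_iff hbdd hS).1 ht
      exact hdc hs hts.le
    have hFa_le : cdf σ a ≤ c := by
      rw [← cdf_leftLim σ hac a]
      apply le_of_tendsto ((monotone_cdf σ).tendsto_leftLim a)
      filter_upwards [eventually_mem_nhdsWithin] with t ht
      exact hIio ht
    have hFa_ge : c ≤ cdf σ a := by
      by_contra h
      push_neg at h
      have hrc : ContinuousWithinAt (cdf σ) (Ici a) a := (cdf σ).right_continuous a
      have hev : ∀ᶠ z in 𝓝[≥] a, cdf σ z < c := hrc.eventually (eventually_lt_nhds h)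
      obtain ⟨u, hu, hIco⟩ := mem_nhdsGE_iff_exists_Ico_subset.1 hev
      have hau : a < u := hu
      have hmid : (a + u)/2 ∈ Ico a u := ⟨by linarith, by linarith⟩
      have hlt : cdf σ ((a + u)/2) < c := hIco hmid
      have hmem : (a + u)/2 ∈ S := hlt.le
      have := le_csSup hbdd hmem
      linarith
    have hSa : S = Iic a := by
      apply Subset.antisymm
      · exact fun s hs => le_csSup hbdd hs
      · intro t ht
        rcases lt_or_eq_of_le (mem_Iic.1 ht) with h | h
        · exact hIio h
        · subst h; exact hFa_le
    rw [hSa, ← ofReal_cdf σ a, le_antisymm hFa_le hFa_ge]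
  · have hSuniv : S = univ := by
      ext t
      simp only [mem_univ, iff_true]
      obtain ⟨s, hs, hts⟩ : ∃ s ∈ S, t ≤ s := by
        by_contra h
        push_neg at h
        exact hbdd ⟨t, fun s hs => (h s hs).le⟩
      exact hdc hs hts
    have hc1 : (1:ℝ) ≤ c := by
      apply le_of_tendsto (tendsto_cdf_atTop σ)
      filter_upwards with z
      exact (hSuniv ▸ mem_univ z : z ∈ S)
    have : c = 1 := le_antisymm h1 hc1
    simp [hSuniv, this]

end

/-- The map `T = F_μ⁻¹ ∘ F_σ` pushes `σ` forward to `μ`. -/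
theorem stmt_0 (σ μ : Measure ℝ) [IsProbabilityMeasure σ] [IsProbabilityMeasure μ]
    (hac : σ ≪ volume) :
    σ.map (otMap1d σ μ) = μ := by
  set F := ⇑(cdf σ) with hFdef
  set A := F ⁻¹' (Ioo (0:ℝ) 1) with hAdef
  have hFmeas : Measurable F := (monotone_cdf σ).measurable
  have hAmeas : MeasurableSet A := hFmeas measurableSet_Ioo
  -- null sets at the extremes
  have hF0 : σ {t | F t ≤ 0} = 0 := by
    simpa using cdf_level_set σ hac le_rfl zero_le_one
  have hF1 : σ {t | (1:ℝ) ≤ F t} = 0 := by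
    have hmeaslt : MeasurableSet {t | F t < 1} := hFmeas measurableSet_Iio
    have hlt : (1:ℝ≥0∞) ≤ σ {t | F t < 1} := by
      have htend : Tendsto (fun n : ℕ => ENNReal.ofReal (1 - 1/(n+1))) atTop
          (𝓝 (ENNReal.ofReal 1)) := by
        apply ENNReal.tendsto_ofReal
        have h0 : Tendsto (fun n : ℕ => 1/((n:ℝ)+1)) atTop (𝓝 0) :=
          tendsto_one_div_add_atTop_nhds_zero_nat
        simpa using tendsto_const_nhds.sub h0
      rw [ENNReal.ofReal_one] at htend
      apply le_of_tendsto htend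
      filter_upwards with n
      have hn0 : (0:ℝ) ≤ 1 - 1/(n+1) := by
        have : 1/((n:ℝ)+1) ≤ 1 := by
          rw [div_le_one (by positivity)]; linarith [Nat.cast_nonneg (α := ℝ) n]
        linarith
      have hn1 : (1:ℝ) - 1/(n+1) ≤ 1 := by
        have : (0:ℝ) < 1/((n:ℝ)+1) := by positivity
        linarith
      calc ENNReal.ofReal (1 - 1/(n+1)) = σ {t | F t ≤ 1 - 1/(n+1)} :=
            (cdf_level_set σ hac hn0 hn1).symm
        _ ≤ σ {t | F t < 1} := by
            apply measure_mono
            intro t ht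
            have ht' : F t ≤ 1 - 1/((n:ℝ)+1) := ht
            have hp : (0:ℝ) < 1/((n:ℝ)+1) := by positivity
            show F t < 1
            linarith
    have hcompl : σ ({t | F t < 1}ᶜ) = 1 - σ {t | F t < 1} := by
      rw [measure_compl hmeaslt (measure_ne_top σ _), measure_univ]
    have hone : σ {t | F t < 1} = 1 :=
      le_antisymm (prob_le_one) hlt
    have : σ ({t | F t < 1}ᶜ) = 0 := by rw [hcompl, hone, tsub_self]
    have hset : {t | (1:ℝ) ≤ F t} = {t | F t < 1}ᶜ := by
      ext t; simp [not_lt]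
    rw [hset, this]
  have hAc : σ Aᶜ = 0 := by
    refine measure_mono_null ?_ (measure_union_null hF0 hF1)
    intro t ht
    simp only [mem_compl_iff, hAdef, mem_preimage, mem_Ioo, not_and_or, not_lt] at ht
    rcases ht with h | h
    · exact Or.inl h
    · exact Or.inr h
  have hmemA : ∀ᵐ t ∂σ, t ∈ A := by
    rw [ae_iff]
    exact hAc
  -- a.e.-measurability of the transport map
  have hmonoOn : MonotoneOn (otMap1d σ μ) A := by
    intro t1 h1 t2 h2 h12
    have h' := qf_monoOn μ h1 h2 ((monotone_cdf σ) h12)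
    simpa [otMap1d, cdf'_eq σ] using h'
  have hTae : AEMeasurable (otMap1d σ μ) σ := by
    have h := aemeasurable_restrict_of_monotoneOn hAmeas hmonoOn (μ := σ)
    rwa [Measure.restrict_eq_self_of_ae_mem hmemA] at h
  -- compute the cdf of the pushforward
  refine Measure.ext_of_Iic _ _ (fun x => ?_)
  rw [Measure.map_apply_of_aemeasurable hTae measurableSet_Iic]
  have hPS : (otMap1d σ μ ⁻¹' Iic x : Set ℝ) =ᵐ[σ] {t | F t ≤ cdf μ x} := by
    rw [eventuallyEq_set]
    filter_upwards [hmemA] with t ht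
    simp only [mem_preimage, mem_Iic, mem_setOf_eq]
    rw [otMap1d, cdf'_eq σ]
    exact qf_le_iff μ ht.1 ht.2
  rw [measure_congr hPS, cdf_level_set σ hac (cdf_nonneg μ x) (cdf_le_one μ x),
    ofReal_cdf]


end
end

section
/- Let σ ∈ W₂(ℝⁿ) be absolutely continuous, μ ∈ W₂(ℝⁿ), {θ₁,…,θₙ} an orthonormal basis, 1 ≤ j ≤ n, and T the j-slice matching map. If ν = T_♯σ, then ν^{θ_i} = μ^{θ_i} for all 1 ≤ i ≤ j, i.e., the pushed-forward measure has the same slices as μ along the first j directions. -/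
open MeasureTheory
open scoped ENNReal RealInnerProductSpace

noncomputable section

namespace SliceAux


open Set Filter Topology ProbabilityTheory

lemma cdf'_nonneg (τ : Measure ℝ) (x : ℝ) : 0 ≤ cdf' τ x := ENNReal.toReal_nonneg

lemma cdf'_le_one (τ : Measure ℝ) [IsProbabilityMeasure τ] (x : ℝ) : cdf' τ x ≤ 1 := by
  rw [cdf']
  calc (τ (Set.Iic x)).toReal ≤ (1 : ℝ≥0∞).toReal :=
        ENNReal.toReal_mono ENNReal.one_ne_top prob_le_one
    _ = 1 := by simp

lemma cdf'_mono (τ : Measure ℝ) [IsFiniteMeasure τ] : Monotone (cdf' τ) := fun a b hab =>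
  ENNReal.toReal_mono (measure_ne_top τ _) (measure_mono (Iic_subset_Iic.2 hab))

lemma measurable_cdf' (τ : Measure ℝ) [IsFiniteMeasure τ] : Measurable (cdf' τ) :=
  (cdf'_mono τ).measurable

lemma cdf'_eq (τ : Measure ℝ) [IsProbabilityMeasure τ] : cdf' τ = cdf τ :=
  funext fun x => (cdf_eq_real τ x).symm

lemma le_cdf'_of_forall (ρ : Measure ℝ) [IsProbabilityMeasure ρ] {s c : ℝ}
    (h : ∀ ε : ℝ, 0 < ε → c ≤ cdf' ρ (s + ε)) : c ≤ cdf' ρ s := by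
  have hseq : Tendsto (fun m : ℕ => s + 1 / (m + 1)) atTop (𝓝[≥] s) := by
    apply tendsto_nhdsWithin_of_tendsto_nhds_of_eventually_within
    · simpa using tendsto_const_nhds.add (tendsto_one_div_add_atTop_nhds_zero_nat (𝕜 := ℝ))
    · filter_upwards with m
      have : (0:ℝ) < 1 / (m + 1) := by positivity
      simp only [mem_Ici]; linarith
  have hc : Tendsto (fun m : ℕ => cdf ρ (s + 1 / (m + 1))) atTop (𝓝 (cdf ρ s)) :=
    ((cdf ρ).right_continuous s).tendsto.comp hseq
  have := ge_of_tendsto hc (by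
    filter_upwards with m
    have : (0:ℝ) < 1 / (m + 1) := by positivity
    have := h _ this
    rwa [cdf'_eq] at this)
  rwa [cdf'_eq]

lemma qf_set_nonempty (τ : Measure ℝ) [IsProbabilityMeasure τ] {y : ℝ} (h1 : y < 1) :
    {z : ℝ | y ≤ cdf' τ z}.Nonempty := by
  obtain ⟨z, hz⟩ := ((tendsto_cdf_atTop τ).eventually (eventually_gt_nhds h1)).exists
  exact ⟨z, by rw [Set.mem_setOf_eq, cdf'_eq]; exact hz.le⟩

lemma qf_set_bddBelow (τ : Measure ℝ) [IsProbabilityMeasure τ] {y : ℝ} (h0 : 0 < y) :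
    BddBelow {z : ℝ | y ≤ cdf' τ z} := by
  obtain ⟨z0, hz0⟩ := ((tendsto_cdf_atBot τ).eventually (eventually_lt_nhds h0)).exists
  refine ⟨z0, fun z hz => ?_⟩
  by_contra h
  push_neg at h
  have : y ≤ cdf' τ z0 := hz.trans (cdf'_mono τ h.le)
  rw [cdf'_eq] at this
  exact absurd this (not_le.2 hz0)

lemma qf_le_iff (τ : Measure ℝ) [IsProbabilityMeasure τ] {y t : ℝ} (h0 : 0 < y) (h1 : y < 1) :
    qf τ y ≤ t ↔ y ≤ cdf' τ t := by
  have hne := qf_set_nonempty τ h1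
  have hbdd := qf_set_bddBelow τ h0
  have hmem : y ≤ cdf' τ (qf τ y) := by
    apply le_cdf'_of_forall
    intro ε hε
    obtain ⟨z, hz, hzlt⟩ := exists_lt_of_csInf_lt hne (lt_add_of_pos_right _ hε)
    exact hz.trans (cdf'_mono τ hzlt.le)
  constructor
  · intro h; exact hmem.trans (cdf'_mono τ h)
  · intro h; exact csInf_le hbdd h

lemma isLowerSet_measurableSet {s : Set ℝ} (hs : IsLowerSet s) : MeasurableSet s := by
  rcases s.eq_empty_or_nonempty with rfl | hne
  · exact MeasurableSet.empty
  by_cases hbdd : BddAbove s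
  · by_cases hmem : sSup s ∈ s
    · have : s = Iic (sSup s) :=
        subset_antisymm (fun x hx => le_csSup hbdd hx) (fun x hx => hs hx hmem)
      rw [this]; exact measurableSet_Iic
    · have : s = Iio (sSup s) := by
        apply subset_antisymm
        · intro x hx
          exact lt_of_le_of_ne (le_csSup hbdd hx) (by rintro rfl; exact hmem hx)
        · intro x hx
          obtain ⟨b, hb, hxb⟩ := exists_lt_of_lt_csSup hne hx
          exact hs hxb.le hb
      rw [this]; exact measurableSet_Iio
  · have : s = univ := eq_univ_of_forall fun y => by
      obtain ⟨x, hx, hyx⟩ := not_bddAbove_iff.1 hbdd y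
      exact hs hyx.le hx
    rw [this]; exact MeasurableSet.univ

def qfGood (τ : Measure ℝ) (y : ℝ) : ℝ := if 0 < y ∧ y < 1 then qf τ y else 0

lemma qf_monoOn (τ : Measure ℝ) [IsProbabilityMeasure τ] :
    MonotoneOn (qf τ) (Ioo (0:ℝ) 1) := by
  intro a ha b hb hab
  exact csInf_le_csInf (qf_set_bddBelow τ ha.1) (qf_set_nonempty τ hb.2)
    (fun z hz => le_trans hab hz)

lemma measurable_qfGood (τ : Measure ℝ) [IsProbabilityMeasure τ] : Measurable (qfGood τ) := by
  apply measurable_of_Iic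
  intro t
  have key : MeasurableSet {y : ℝ | y ∈ Ioo (0:ℝ) 1 ∧ qf τ y ≤ t} := by
    have hL : IsLowerSet {y : ℝ | y ≤ 0 ∨ (y ∈ Ioo (0:ℝ) 1 ∧ qf τ y ≤ t)} := by
      intro b a hab hb
      rcases le_or_gt a 0 with h | h
      · exact Or.inl h
      · rcases hb with hb | hb
        · exact absurd hab (not_le.2 (lt_of_le_of_lt hb h))
        · exact Or.inr ⟨⟨h, lt_of_le_of_lt hab hb.1.2⟩,
            (qf_monoOn τ ⟨h, lt_of_le_of_lt hab hb.1.2⟩ hb.1 hab).trans hb.2⟩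
    have hset : {y : ℝ | y ∈ Ioo (0:ℝ) 1 ∧ qf τ y ≤ t}
        = {y : ℝ | y ≤ 0 ∨ (y ∈ Ioo (0:ℝ) 1 ∧ qf τ y ≤ t)} ∩ Ioo 0 1 := by
      ext y
      constructor
      · exact fun h => ⟨Or.inr h, h.1⟩
      · rintro ⟨h | h, hy⟩
        · exact absurd hy.1 (not_lt.2 h)
        · exact h
    rw [hset]
    exact (isLowerSet_measurableSet hL).inter measurableSet_Ioo
  have hpre : qfGood τ ⁻¹' Iic t
      = {y : ℝ | y ∈ Ioo (0:ℝ) 1 ∧ qf τ y ≤ t} ∪ ((Ioo (0:ℝ) 1)ᶜ ∩ {y : ℝ | (0:ℝ) ≤ t}) := by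
    ext y
    simp only [mem_preimage, mem_Iic, qfGood, mem_union, mem_inter_iff, mem_compl_iff,
      mem_setOf_eq, mem_Ioo]
    by_cases hy : 0 < y ∧ y < 1
    · simp [hy]
    · simp [hy]
  rw [hpre]
  exact key.union (measurableSet_Ioo.compl.inter (MeasurableSet.const _))

lemma meas_cdf'_le (ρ : Measure ℝ) [IsProbabilityMeasure ρ] (hat : ∀ t : ℝ, ρ {t} = 0)
    {c : ℝ} (h0 : 0 ≤ c) (h1 : c ≤ 1) :
    ρ {y : ℝ | cdf' ρ y ≤ c} = ENNReal.ofReal c := by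
  haveI : NoAtoms ρ := ⟨hat⟩
  have hIic : ∀ s : ℝ, ρ (Iic s) = ENNReal.ofReal (cdf' ρ s) := fun s =>
    (ENNReal.ofReal_toReal (measure_ne_top ρ _)).symm
  have hIio : ∀ s : ℝ, ρ (Iio s) = ENNReal.ofReal (cdf' ρ s) := fun s => by
    rw [← hIic]; exact measure_congr (Iio_ae_eq_Iic' (hat s))
  have hlow : IsLowerSet {y : ℝ | cdf' ρ y ≤ c} := fun b a hab hb =>
    le_trans (cdf'_mono ρ hab) hb
  rcases Set.eq_empty_or_nonempty {y : ℝ | cdf' ρ y ≤ c} with hBe | hne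
  · have hc : c ≤ 0 := by
      refine ge_of_tendsto ((cdf'_eq ρ) ▸ tendsto_cdf_atBot ρ) ?_
      filter_upwards with y
      exact (not_le.1 (eq_empty_iff_forall_notMem.1 hBe y)).le
    have : c = 0 := le_antisymm hc h0
    rw [hBe, this]
    simp
  · by_cases hbdd : BddAbove {y : ℝ | cdf' ρ y ≤ c}
    · set s := sSup {y : ℝ | cdf' ρ y ≤ c} with hs
      have hsub1 : Iio s ⊆ {y : ℝ | cdf' ρ y ≤ c} := fun x hx => by
        obtain ⟨b, hb, hxb⟩ := exists_lt_of_lt_csSup hne hx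
        exact hlow hxb.le hb
      have hsub2 : {y : ℝ | cdf' ρ y ≤ c} ⊆ Iic s := fun x hx => le_csSup hbdd hx
      have hval : ρ {y : ℝ | cdf' ρ y ≤ c} = ENNReal.ofReal (cdf' ρ s) :=
        le_antisymm (by rw [← hIic]; exact measure_mono hsub2)
          (by rw [← hIio]; exact measure_mono hsub1)
      have hle : cdf' ρ s ≤ c := by
        have hU : Iio s = ⋃ m : ℕ, Iic (s - 1 / (m + 1)) := by
          ext x
          simp only [mem_Iio, mem_iUnion, mem_Iic]
          constructor
          · intro hx
            obtain ⟨m, hm⟩ := exists_nat_one_div_lt (sub_pos.2 hx)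
            exact ⟨m, by push_cast at hm ⊢; linarith⟩
          · rintro ⟨m, hm⟩
            have : (0:ℝ) < 1 / (m + 1) := by positivity
            linarith
        have hmono : Monotone fun m : ℕ => Iic (s - 1 / (m + 1) : ℝ) := by
          intro a b hab
          apply Iic_subset_Iic.2
          have ha : (0:ℝ) < (a:ℝ) + 1 := by positivity
          have hb : (0:ℝ) < (b:ℝ) + 1 := by positivity
          have : (1:ℝ) / (b + 1) ≤ 1 / (a + 1) := by
            apply one_div_le_one_div_of_le ha
            have hcast : ((a:ℝ)) ≤ b := Nat.cast_le.mpr hab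
            push_cast
            linarith
          linarith
        have hlimit : ρ (Iio s) ≤ ENNReal.ofReal c := by
          rw [hU, hmono.directed_le.measure_iUnion]
          apply iSup_le
          intro m
          rw [hIic]
          apply ENNReal.ofReal_le_ofReal
          have hmem : (s - 1 / (m + 1) : ℝ) ∈ Iio s := by
            have : (0:ℝ) < 1 / (m + 1) := by positivity
            simp only [mem_Iio]; linarith
          exact hsub1 hmem
        rw [hIio] at hlimit
        exact (ENNReal.ofReal_le_ofReal_iff h0).1 hlimit
      have hge : c ≤ cdf' ρ s := by
        apply le_cdf'_of_forall
        intro ε hε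
        have hmem : s + ε ∉ {y : ℝ | cdf' ρ y ≤ c} := fun h =>
          absurd (hsub2 h) (not_le.2 (lt_add_of_pos_right s hε))
        exact (not_le.1 hmem).le
      rw [hval, le_antisymm hle hge]
    · have hBu : {y : ℝ | cdf' ρ y ≤ c} = univ := eq_univ_of_forall fun y => by
        obtain ⟨x, hx, hyx⟩ := not_bddAbove_iff.1 hbdd y
        exact hlow hyx.le hx
      have hc1 : (1:ℝ) ≤ c := by
        refine le_of_tendsto ((cdf'_eq ρ) ▸ tendsto_cdf_atTop ρ) ?_
        filter_upwards with y
        exact (eq_univ_iff_forall.1 hBu y : cdf' ρ y ≤ c)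
      rw [hBu, le_antisymm h1 hc1]
      simp

lemma meas_cdf'_eq_one (ρ : Measure ℝ) [IsProbabilityMeasure ρ] (hat : ∀ t : ℝ, ρ {t} = 0) :
    ρ {y : ℝ | cdf' ρ y = 1} = 0 := by
  rcases Set.eq_empty_or_nonempty {y : ℝ | cdf' ρ y = 1} with hAe | hne
  · rw [hAe]; simp
  have hup : IsUpperSet {y : ℝ | cdf' ρ y = 1} := fun a b hab ha =>
    le_antisymm (cdf'_le_one ρ b) (by rw [← ha]; exact cdf'_mono ρ hab)
  by_cases hbdd : BddBelow {y : ℝ | cdf' ρ y = 1}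
  · set a := sInf {y : ℝ | cdf' ρ y = 1} with ha
    have h1 : cdf' ρ a = 1 := by
      refine le_antisymm (cdf'_le_one ρ a) (le_cdf'_of_forall ρ fun ε hε => ?_)
      obtain ⟨x, hx, hxa⟩ := exists_lt_of_csInf_lt hne (lt_add_of_pos_right _ hε)
      rw [← hx]
      exact cdf'_mono ρ hxa.le
    have hIica : ρ (Iic a) = 1 := by
      have h2 : ρ (Iic a) = ENNReal.ofReal (cdf' ρ a) :=
        (ENNReal.ofReal_toReal (measure_ne_top ρ _)).symm
      rw [h2, h1]; simp
    have hIoi : ρ (Ioi a) = 0 := by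
      have := measure_compl (measurableSet_Iic (a := a)) (measure_ne_top ρ _)
      rw [compl_Iic] at this
      rw [this, hIica, measure_univ, tsub_self]
    have hIci : ρ (Ici a) = 0 := by
      have hins : Ici a = insert a (Ioi a) := Set.Ioi_insert.symm
      rw [hins]
      refine le_antisymm ?_ zero_le
      calc ρ (insert a (Ioi a)) ≤ ρ {a} + ρ (Ioi a) := by
            rw [← Set.singleton_union]; exact measure_union_le _ _
        _ = 0 := by rw [hat a, hIoi, add_zero]
    have hsub : {y : ℝ | cdf' ρ y = 1} ⊆ Ici a := fun x hx => csInf_le hbdd hx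
    exact le_antisymm ((measure_mono hsub).trans hIci.le) zero_le
  · exfalso
    have hAu : {y : ℝ | cdf' ρ y = 1} = univ := eq_univ_of_forall fun y => by
      obtain ⟨x, hx, hyx⟩ := not_bddBelow_iff.1 hbdd y
      exact hup hyx.le hx
    have hone : cdf' ρ = fun _ => (1:ℝ) := funext fun y => (eq_univ_iff_forall.1 hAu y : _)
    have h01 : (0:ℝ) = 1 := tendsto_nhds_unique ((cdf'_eq ρ) ▸ tendsto_cdf_atBot ρ)
      (by rw [hone]; exact tendsto_const_nhds)
    norm_num at h01

lemma map_qfGood (ρ τ : Measure ℝ) [IsProbabilityMeasure ρ] [IsProbabilityMeasure τ]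
    (hat : ∀ t : ℝ, ρ {t} = 0) :
    ρ.map (fun y => qfGood τ (cdf' ρ y)) = τ := by
  have hg : Measurable fun y => qfGood τ (cdf' ρ y) :=
    (measurable_qfGood τ).comp (measurable_cdf' ρ)
  haveI := Measure.isProbabilityMeasure_map (μ := ρ) hg.aemeasurable
  refine Measure.ext_of_Iic _ _ fun t => ?_
  rw [Measure.map_apply hg measurableSet_Iic]
  have hae : ((fun y => qfGood τ (cdf' ρ y)) ⁻¹' Iic t : Set ℝ)
      =ᵐ[ρ] {y : ℝ | cdf' ρ y ≤ cdf' τ t} := by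
    have hA : ρ {y : ℝ | cdf' ρ y ≤ 0} = 0 := by
      simpa using meas_cdf'_le ρ hat le_rfl zero_le_one
    have hB : ρ {y : ℝ | cdf' ρ y = 1} = 0 := meas_cdf'_eq_one ρ hat
    rw [Filter.eventuallyEq_set]
    filter_upwards [measure_eq_zero_iff_ae_notMem.1 hA, measure_eq_zero_iff_ae_notMem.1 hB] with y h0 h1
    have hy0 : 0 < cdf' ρ y := not_le.1 h0
    have hy1 : cdf' ρ y < 1 := lt_of_le_of_ne (cdf'_le_one ρ y) h1
    simp only [mem_preimage, mem_Iic, mem_setOf_eq, qfGood, if_pos (And.intro hy0 hy1)]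
    exact qf_le_iff τ hy0 hy1
  rw [measure_congr hae, meas_cdf'_le ρ hat (cdf'_nonneg τ t) (cdf'_le_one τ t)]
  exact ENNReal.ofReal_toReal (measure_ne_top τ _)

lemma measurable_proj {n : ℕ} (θ : Eu n) : Measurable (proj θ) :=
  (continuous_id.inner continuous_const).measurable

lemma slice_atomless {n : ℕ} (σ : Measure (Eu n)) (hac : σ ≪ volume) {θ : Eu n}
    (hθ : ‖θ‖ = 1) (t : ℝ) : sliceOf σ θ {t} = 0 := by
  rw [sliceOf, Measure.map_apply (measurable_proj θ) (measurableSet_singleton t)]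
  apply hac
  have hθθ : ⟪θ, θ⟫ = 1 := by
    rw [real_inner_self_eq_norm_mul_norm, hθ, one_mul]
  have hker : (proj θ ⁻¹' {t})
      = (fun x : Eu n => x + (-(t • θ))) ⁻¹' (LinearMap.ker (innerSL ℝ θ).toLinearMap : Set (Eu n)) := by
    ext x
    simp only [mem_preimage, mem_singleton_iff, SetLike.mem_coe, LinearMap.mem_ker, proj,
      ContinuousLinearMap.coe_coe, innerSL_apply_apply, inner_add_right, inner_neg_right, real_inner_smul_right, hθθ, mul_one,
      real_inner_comm θ x]
    constructor
    · intro h; rw [h]; ring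
    · intro h; linarith
  rw [hker, measure_preimage_add_right]
  refine Measure.addHaar_submodule volume _ fun htop => ?_
  have hmem : θ ∈ LinearMap.ker (innerSL ℝ θ).toLinearMap := htop ▸ Submodule.mem_top
  rw [LinearMap.mem_ker, ContinuousLinearMap.coe_coe, innerSL_apply_apply, hθθ] at hmem
  norm_num at hmem

lemma proj_sum {n : ℕ} {θ : Fin n → Eu n} (hθ : Orthonormal ℝ θ) (c : Fin n → ℝ) (i : Fin n) :
    proj (θ i) (∑ k : Fin n, c k • θ k) = c i := by
  classical
  rw [proj, sum_inner]
  have hite := orthonormal_iff_ite.1 hθ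
  simp only [real_inner_smul_left, hite]
  simp [Finset.sum_ite_eq', mul_ite]

end SliceAux

open SliceAux

/-- the pushforward by the `j`-slice matching map has the same slices
as `μ` along the first `j` directions. -/
theorem stmt_5 {n j : ℕ} (hj1 : 1 ≤ j) (hjn : j ≤ n)
    (σ μ : Measure (Eu n)) [IsProbabilityMeasure σ] [IsProbabilityMeasure μ]
    (hac : σ ≪ volume) (hσ2 : FiniteSecondMoment σ) (hμ2 : FiniteSecondMoment μ)
    (θ : Fin n → Eu n) (hθ : Orthonormal ℝ θ) :
    ∀ i : Fin n, (i : ℕ) < j →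
      sliceOf (σ.map (sliceMap σ μ θ j)) (θ i) = sliceOf μ (θ i) := by
  classical
  intro i hi
  open SliceAux Set Filter in
  have hρP : ∀ k : Fin n, IsProbabilityMeasure (sliceOf σ (θ k)) := fun k =>
    Measure.isProbabilityMeasure_map (measurable_proj (θ k)).aemeasurable
  have hτP : ∀ k : Fin n, IsProbabilityMeasure (sliceOf μ (θ k)) := fun k =>
    Measure.isProbabilityMeasure_map (measurable_proj (θ k)).aemeasurable
  have hat : ∀ k : Fin n, ∀ t : ℝ, sliceOf σ (θ k) {t} = 0 := fun k t =>
    slice_atomless σ hac (hθ.1 k) t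
  set Tg : Eu n → Eu n := fun x => ∑ k : Fin n,
    (if (k : ℕ) < j then qfGood (sliceOf μ (θ k)) (cdf' (sliceOf σ (θ k)) (proj (θ k) x))
     else proj (θ k) x) • θ k with hTg
  have hTmeas : Measurable Tg := by
    apply Finset.measurable_sum
    intro k _
    by_cases hk : (k : ℕ) < j
    · haveI := hτP k; haveI := hρP k
      simp only [if_pos hk]
      exact ((measurable_qfGood (sliceOf μ (θ k))).comp
        ((measurable_cdf' (sliceOf σ (θ k))).comp (measurable_proj (θ k)))).smul_const _
    · simp only [if_neg hk]
      exact (measurable_proj (θ k)).smul_const _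
  have hae : sliceMap σ μ θ j =ᵐ[σ] Tg := by
    have hnull : ∀ k : Fin n, (k : ℕ) < j →
        (∀ᵐ x ∂σ, 0 < cdf' (sliceOf σ (θ k)) (proj (θ k) x) ∧
          cdf' (sliceOf σ (θ k)) (proj (θ k) x) < 1) := by
      intro k _
      haveI := hρP k
      have hm0 : MeasurableSet {y : ℝ | cdf' (sliceOf σ (θ k)) y ≤ 0} :=
        measurable_cdf' _ measurableSet_Iic
      have hm1 : MeasurableSet {y : ℝ | cdf' (sliceOf σ (θ k)) y = 1} :=
        measurable_cdf' _ (measurableSet_singleton 1)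
    
      have h0 : σ {x | cdf' (sliceOf σ (θ k)) (proj (θ k) x) ≤ 0} = 0 := by
        have heq : {x | cdf' (sliceOf σ (θ k)) (proj (θ k) x) ≤ 0}
            = proj (θ k) ⁻¹' {y : ℝ | cdf' (sliceOf σ (θ k)) y ≤ 0} := rfl
        rw [heq, ← Measure.map_apply (measurable_proj (θ k)) hm0]
        have : σ.map (proj (θ k)) = sliceOf σ (θ k) := rfl
        rw [this]
        simpa using meas_cdf'_le (sliceOf σ (θ k)) (hat k) le_rfl zero_le_one
      have h1 : σ {x | cdf' (sliceOf σ (θ k)) (proj (θ k) x) = 1} = 0 := by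
        have heq : {x | cdf' (sliceOf σ (θ k)) (proj (θ k) x) = 1}
            = proj (θ k) ⁻¹' {y : ℝ | cdf' (sliceOf σ (θ k)) y = 1} := rfl
        rw [heq, ← Measure.map_apply (measurable_proj (θ k)) hm1]
        have : σ.map (proj (θ k)) = sliceOf σ (θ k) := rfl
        rw [this]
        exact meas_cdf'_eq_one (sliceOf σ (θ k)) (hat k)
      filter_upwards [measure_eq_zero_iff_ae_notMem.1 h0, measure_eq_zero_iff_ae_notMem.1 h1] with x hx0 hx1
      exact ⟨not_le.1 hx0, lt_of_le_of_ne (cdf'_le_one _ _) hx1⟩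
    have hall : ∀ᵐ x ∂σ, ∀ k : Fin n, (k : ℕ) < j →
        (0 < cdf' (sliceOf σ (θ k)) (proj (θ k) x) ∧
          cdf' (sliceOf σ (θ k)) (proj (θ k) x) < 1) := by
      rw [MeasureTheory.ae_all_iff]
      intro k
      by_cases hk : (k : ℕ) < j
      · filter_upwards [hnull k hk] with x hx _
        exact hx
      · filter_upwards with x hk'
        exact absurd hk' hk
    filter_upwards [hall] with x hx
    show sliceMap σ μ θ j x = Tg x
    rw [sliceMap, hTg]
    refine Finset.sum_congr rfl fun k _ => ?_
    by_cases hk : (k : ℕ) < j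
    · simp only [if_pos hk]
      congr 1
      rw [otMap1d, qfGood, if_pos (hx k hk)]
    · simp [hk]
  haveI := hρP i; haveI := hτP i
  rw [show σ.map (sliceMap σ μ θ j) = σ.map Tg from Measure.map_congr hae]
  rw [sliceOf, Measure.map_map (measurable_proj (θ i)) hTmeas]
  have hcomp : (proj (θ i)) ∘ Tg
      = (fun y => qfGood (sliceOf μ (θ i)) (cdf' (sliceOf σ (θ i)) y)) ∘ (proj (θ i)) := by
    funext x
    simp only [Function.comp_apply, hTg]
    rw [proj_sum hθ _ i, if_pos hi]
  have hgi : Measurable (fun y => qfGood (sliceOf μ (θ i)) (cdf' (sliceOf σ (θ i)) y)) :=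
    (measurable_qfGood (sliceOf μ (θ i))).comp (measurable_cdf' (sliceOf σ (θ i)))
  rw [hcomp, ← Measure.map_map hgi (measurable_proj (θ i))]
  have hmapρ : σ.map (proj (θ i)) = sliceOf σ (θ i) := rfl
  rw [hmapρ]
  exact map_qfGood (sliceOf σ (θ i)) (sliceOf μ (θ i)) (hat i)

end
end
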